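/- Let b be a block of a finite simple graph G and let u ≠ v be two vertices of b. Then every path in G from u to v contains at least one edge of b. -/

import Mathlib

/-- A vertex `v` of a subgraph `B` is a cutvertex if deleting it increases the number of
connected components of `B`. -/
def SimpleGraph.Subgraph.IsCutvertex {V : Type*} {G : SimpleGraph V}
    (B : G.Subgraph) (v : V) : Prop :=
  v ∈ B.verts ∧
    Nat.card B.coe.ConnectedComponent <
      Nat.card (B.deleteVerts {v}).coe.ConnectedComponent

/-- A block of `G` is a maximal connected subgraph of `G` without a cutvertex. -/
def SimpleGraph.Subgraph.IsBlock {V : Type*} {G : SimpleGraph V}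
    (B : G.Subgraph) : Prop :=
  B.Connected ∧ (∀ v, ¬ B.IsCutvertex v) ∧
    ∀ B' : G.Subgraph, B ≤ B' → B'.Connected → (∀ v, ¬ B'.IsCutvertex v) → B' = B

namespace SimpleGraph

private lemma cc_finite {W : Type*} [Finite W] (H : SimpleGraph W) :
    Finite H.ConnectedComponent :=
  Finite.of_surjective H.connectedComponentMk (fun c => c.exists_rep)

private lemma card_cc_le_one_of_preconnected {W : Type*} {H : SimpleGraph W}
    (h : H.Preconnected) : Nat.card H.ConnectedComponent ≤ 1 := by
  cases isEmpty_or_nonempty W with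
  | inl he =>
    haveI : IsEmpty H.ConnectedComponent := ⟨fun c => c.ind (fun v => isEmptyElim v)⟩
    simp
  | inr hne =>
    haveI : Nonempty H.ConnectedComponent := ⟨H.connectedComponentMk (Classical.arbitrary W)⟩
    haveI : Subsingleton H.ConnectedComponent :=
      ⟨ConnectedComponent.ind₂ fun x y => ConnectedComponent.sound (h x y)⟩
    exact le_of_eq Nat.card_unique

private lemma preconnected_of_card_cc_le_one {W : Type*} [Finite W] {H : SimpleGraph W}
    (h : Nat.card H.ConnectedComponent ≤ 1) : H.Preconnected := by
  haveI : Finite H.ConnectedComponent := cc_finite H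
  haveI : Subsingleton H.ConnectedComponent := by
    by_contra hns
    rw [not_subsingleton_iff_nontrivial] at hns
    have := Finite.one_lt_card_iff_nontrivial.mpr hns
    omega
  intro x y
  exact (ConnectedComponent.eq).mp (Subsingleton.elim _ _)

private lemma le_deleteVerts_of_not_mem {V : Type*} {G : SimpleGraph V}
    {H K : G.Subgraph} {w : V} (hle : H ≤ K) (hw : w ∉ H.verts) :
    H ≤ K.deleteVerts {w} := by
  constructor
  · intro x hx
    exact ⟨hle.1 hx, by rintro rfl; exact hw hx⟩
  · intro x y hxy
    rw [Subgraph.deleteVerts_adj]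
    refine ⟨hle.1 (H.edge_vert hxy), ?_, hle.1 (H.edge_vert hxy.symm), ?_, hle.2 hxy⟩
    · simp only [Set.mem_singleton_iff]; rintro rfl; exact hw (H.edge_vert hxy)
    · simp only [Set.mem_singleton_iff]; rintro rfl; exact hw (H.edge_vert hxy.symm)

private lemma preconnected_delete_of_not_cutvertex {V : Type*} [Finite V] {G : SimpleGraph V}
    {B : G.Subgraph} (hc : B.Connected) {w : V} (h : ¬ B.IsCutvertex w) :
    (B.deleteVerts {w}).coe.Preconnected := by
  by_cases hw : w ∈ B.verts
  · apply preconnected_of_card_cc_le_one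
    have h1 : Nat.card B.coe.ConnectedComponent ≤ 1 :=
      card_cc_le_one_of_preconnected hc.coe.preconnected
    have h2 : ¬ (Nat.card B.coe.ConnectedComponent <
        Nat.card (B.deleteVerts {w}).coe.ConnectedComponent) := fun hl => h ⟨hw, hl⟩
    omega
  · have hconn : (B.deleteVerts {w}).Connected := by
      refine hc.mono' (fun a b hab => ?_) ?_
      · rw [Subgraph.deleteVerts_adj]
        refine ⟨B.edge_vert hab, ?_, B.edge_vert hab.symm, ?_, hab⟩
        · simp only [Set.mem_singleton_iff]; rintro rfl; exact hw (B.edge_vert hab)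
        · simp only [Set.mem_singleton_iff]; rintro rfl; exact hw (B.edge_vert hab.symm)
      · rw [Subgraph.deleteVerts_verts, Set.diff_singleton_eq_self hw]
    exact hconn.coe.preconnected

end SimpleGraph

open SimpleGraph in
/-- If `b` is a block of `G` and `u ≠ v` are vertices of `b`, then every path of `G`
from `u` to `v` contains at least one edge of `b`. -/
theorem path_between_block_vertices_uses_block_edge {V : Type*} [Fintype V]
    (G : SimpleGraph V) (b : G.Subgraph) (hb : b.IsBlock)
    (u v : V) (hu : u ∈ b.verts) (hv : v ∈ b.verts) (huv : u ≠ v)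
    (p : G.Walk u v) (hp : p.IsPath) :
    ∃ e ∈ p.edges, e ∈ b.edgeSet := by
  classical
  by_contra hno
  push_neg at hno
  obtain ⟨hbc, hbnc, hbmax⟩ := hb
  set b' : G.Subgraph := b ⊔ p.toSubgraph with hb'def
  have hb'c : b'.Connected :=
    Subgraph.connected_sup hbc.preconnected p.toSubgraph_connected.preconnected ⟨u, hu, p.start_mem_verts_toSubgraph⟩
  have hPle : p.toSubgraph ≤ b' := le_sup_right
  -- key: deleting any vertex from b' leaves a preconnected graph
  have key : ∀ w : V, (b'.deleteVerts {w}).coe.Preconnected := by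
    intro w
    have hA : (b.deleteVerts {w}).coe.Preconnected :=
      preconnected_delete_of_not_cutvertex hbc (hbnc w)
    have hAD : b.deleteVerts {w} ≤ b'.deleteVerts {w} :=
      Subgraph.deleteVerts_mono le_sup_left
    -- every vertex of b' - w reaches some vertex of b - w
    have main : ∀ x (hx : x ∈ (b'.deleteVerts {w}).verts),
        ∃ y, ∃ hy : y ∈ (b.deleteVerts {w}).verts,
          (b'.deleteVerts {w}).coe.Reachable ⟨x, hx⟩ ⟨y, hAD.1 hy⟩ := by
      rintro x hx
      obtain ⟨hx', hxw⟩ := hx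
      have hxw' : x ≠ w := fun h => hxw (by simp [h])
      rcases hx' with hxb | hxp
      · exact ⟨x, ⟨hxb, hxw⟩, Reachable.refl _⟩
      · rw [Walk.mem_verts_toSubgraph] at hxp
        have hsplit := p.take_spec hxp
        by_cases hw1 : w ∈ (p.takeUntil x hxp).support
        · -- w is on the first segment, use the second one, reaching v
          have hw2 : w ∉ (p.dropUntil x hxp).support := by
            intro hw2
            have hnd : ((p.takeUntil x hxp).support ++
                (p.dropUntil x hxp).support.tail).Nodup := by
              rw [← Walk.support_append, hsplit]; exact hp.support_nodup
            have hdisj := List.disjoint_of_nodup_append hnd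
            rw [Walk.support_eq_cons, List.mem_cons] at hw2
            rcases hw2 with heq | hw2
            · exact hxw' heq.symm
            · exact hdisj hw1 hw2
          have hle : (p.dropUntil x hxp).toSubgraph ≤ b'.deleteVerts {w} := by
            apply le_deleteVerts_of_not_mem
            · refine le_trans ?_ hPle
              conv_rhs => rw [← hsplit]
              rw [Walk.toSubgraph_append]
              exact le_sup_right
            · rw [Walk.mem_verts_toSubgraph]; exact hw2
          have hvw : v ≠ w := by
            rintro rfl; exact hw2 (Walk.end_mem_support _)
          refine ⟨v, ⟨hv, by simpa using hvw⟩, ?_⟩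
          exact Reachable.map (Subgraph.inclusion hle)
            ((p.dropUntil x hxp).toSubgraph_connected
              ⟨x, Walk.start_mem_verts_toSubgraph _⟩
              ⟨v, Walk.end_mem_verts_toSubgraph _⟩)
        · -- w not on the first segment, use it, reaching u
          have hle : (p.takeUntil x hxp).toSubgraph ≤ b'.deleteVerts {w} := by
            apply le_deleteVerts_of_not_mem
            · refine le_trans ?_ hPle
              conv_rhs => rw [← hsplit]
              rw [Walk.toSubgraph_append]
              exact le_sup_left
            · rw [Walk.mem_verts_toSubgraph]; exact hw1
          have huw : u ≠ w := by
            rintro rfl; exact hw1 (Walk.start_mem_support _)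
          refine ⟨u, ⟨hu, by simpa using huw⟩, ?_⟩
          exact Reachable.map (Subgraph.inclusion hle)
            ((p.takeUntil x hxp).toSubgraph_connected
              ⟨x, Walk.end_mem_verts_toSubgraph _⟩
              ⟨u, Walk.start_mem_verts_toSubgraph _⟩)
    rintro ⟨x, hx⟩ ⟨y, hy⟩
    obtain ⟨ax, hax, hrx⟩ := main x hx
    obtain ⟨ay, hay, hry⟩ := main y hy
    have hmid : (b'.deleteVerts {w}).coe.Reachable ⟨ax, hAD.1 hax⟩ ⟨ay, hAD.1 hay⟩ :=
      Reachable.map (Subgraph.inclusion hAD) (hA ⟨ax, hax⟩ ⟨ay, hay⟩)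
    exact hrx.trans (hmid.trans hry.symm)
  have hb'nc : ∀ w, ¬ b'.IsCutvertex w := by
    rintro w ⟨hwv, hlt⟩
    have h1 : Nat.card (b'.deleteVerts {w}).coe.ConnectedComponent ≤ 1 :=
      card_cc_le_one_of_preconnected (key w)
    have h2 : 0 < Nat.card b'.coe.ConnectedComponent := by
      haveI : Nonempty b'.coe.ConnectedComponent :=
        ⟨b'.coe.connectedComponentMk ⟨u, Or.inl hu⟩⟩
      haveI : Finite b'.coe.ConnectedComponent := cc_finite _
      exact Nat.card_pos
    omega
  have heq : b' = b := hbmax b' le_sup_left hb'c hb'nc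
  have hPb : p.toSubgraph ≤ b := heq ▸ hPle
  -- p has at least one edge, which must then be in b
  cases p with
  | nil => exact huv rfl
  | cons h q =>
    refine hno _ List.mem_cons_self ?_
    exact (Subgraph.edgeSet_mono hPb)
      ((Walk.mem_edges_toSubgraph _).mpr List.mem_cons_self)
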